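/- For every real r and every complex k, the plane wave e^{i k r cos θ} admits the expansion e^{i k r cos θ} = Σ_{n=-∞}^{∞} i^n J_n(k r) e^{i n θ}, where J_n is the Bessel function of the first kind of order n (the Jacobi–Anger expansion), with the series converging for each θ. -/

import Mathlib

open Complex Real MeasureTheory Filter Topology

/-- Bessel function of the first kind of nonnegative integer order (power series). -/
noncomputable def besselJnat (n : ℕ) (z : ℂ) : ℂ :=
  ∑' m : ℕ, ((-1 : ℂ) ^ m / ((Nat.factorial m : ℂ) * (Nat.factorial (m + n) : ℂ)))
    * (z / 2) ^ (2 * m + n)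

/-- Bessel function of the first kind of integer order, using `J_{-n} = (-1)^n J_n`. -/
noncomputable def besselJ (n : ℤ) (z : ℂ) : ℂ :=
  if 0 ≤ n then besselJnat n.toNat z else (-1 : ℂ) ^ (-n).toNat * besselJnat (-n).toNat z

/-- Partial sums of the harmonic series. -/
noncomputable def harmonicNum (m : ℕ) : ℝ := ∑ i ∈ Finset.range m, (1 : ℝ) / (i + 1)

/-- Bessel function of the second kind of nonnegative integer order (series expansion). -/
noncomputable def besselYnat (n : ℕ) (z : ℂ) : ℂ :=
  (2 / Real.pi) * (Complex.log (z / 2) + (Real.eulerMascheroniConstant : ℂ)) * besselJnat n z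
    - (1 / Real.pi) * ∑ m ∈ Finset.range n,
        ((Nat.factorial (n - m - 1) : ℂ) / (Nat.factorial m : ℂ)) * (z / 2) ^ (2 * (m : ℤ) - (n : ℤ))
    - (1 / Real.pi) * ∑' m : ℕ,
        ((-1 : ℂ) ^ m * ((harmonicNum m + harmonicNum (m + n) : ℝ) : ℂ)
          / ((Nat.factorial m : ℂ) * (Nat.factorial (m + n) : ℂ))) * (z / 2) ^ (2 * m + n)

/-- Bessel function of the second kind of integer order, `Y_{-n} = (-1)^n Y_n`. -/
noncomputable def besselY (n : ℤ) (z : ℂ) : ℂ :=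
  if 0 ≤ n then besselYnat n.toNat z else (-1 : ℂ) ^ (-n).toNat * besselYnat (-n).toNat z

/-- Hankel function of the first kind, `H_n = J_n + i Y_n`. -/
noncomputable def hankelH (n : ℤ) (z : ℂ) : ℂ := besselJ n z + Complex.I * besselY n z

/-- Derivative of `J_n`. -/
noncomputable def besselJ' (n : ℤ) (z : ℂ) : ℂ := deriv (besselJ n) z

/-- Derivative of `H_n`. -/
noncomputable def hankelH' (n : ℤ) (z : ℂ) : ℂ := deriv (hankelH n) z

/-- The branch of `√(λ² - k²)` given by the principal complex square root. -/
noncomputable def sqrtBr (k : ℂ) (l : ℝ) : ℂ := ((l : ℂ) ^ 2 - k ^ 2) ^ (1/2 : ℂ)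

lemma exp_hasSum (w : ℂ) : HasSum (fun p : ℕ => w ^ p / p.factorial) (Complex.exp w) := by
  rw [Complex.exp_eq_exp_ℂ]
  exact NormedSpace.expSeries_div_hasSum_exp (𝔸 := ℂ) w

lemma exp_norm_summable (w : ℂ) : Summable (fun p : ℕ => ‖w ^ p / (p.factorial : ℂ)‖) := by
  have := Real.summable_pow_div_factorial ‖w‖
  refine this.congr fun p => ?_
  rw [norm_div, norm_pow]
  simp

lemma besselTerm_summable (n : ℕ) (z : ℂ) :
    Summable (fun m : ℕ => ((-1 : ℂ) ^ m / ((Nat.factorial m : ℂ) * (Nat.factorial (m + n) : ℂ)))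
      * (z / 2) ^ (2 * m + n)) := by
  apply Summable.of_norm
  refine Summable.of_nonneg_of_le (fun m => norm_nonneg _) (fun m => ?_)
    ((Real.summable_pow_div_factorial (‖z / 2‖ ^ 2)).mul_left (‖z / 2‖ ^ n))
  have hfac : ∀ j : ℕ, (1 : ℝ) ≤ (j.factorial : ℝ) := fun j => by
    exact_mod_cast Nat.one_le_iff_ne_zero.mpr (Nat.factorial_ne_zero j)
  have h1 : ‖((-1 : ℂ) ^ m / ((Nat.factorial m : ℂ) * (Nat.factorial (m + n) : ℂ)))
      * (z / 2) ^ (2 * m + n)‖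
      = ‖z / 2‖ ^ (2 * m + n) / ((Nat.factorial m : ℝ) * (Nat.factorial (m + n) : ℝ)) := by
    rw [norm_mul, norm_div, norm_pow, norm_pow, norm_neg, norm_one, one_pow, norm_mul]
    simp [div_mul_eq_mul_div, one_mul, Complex.norm_natCast]
    ring
  rw [h1]
  have h2 : ‖z / 2‖ ^ (2 * m + n) = ‖z / 2‖ ^ n * (‖z / 2‖ ^ 2) ^ m := by
    rw [← pow_mul, ← pow_add]; ring_nf
  rw [h2, mul_div_assoc]
  refine mul_le_mul_of_nonneg_left ?_ (by positivity)
  refine div_le_div_of_nonneg_left ?_ ?_ ?_ |>.trans_eq rfl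
  · positivity
  · exact lt_of_lt_of_le one_pos (hfac m)
  · calc (Nat.factorial m : ℝ) = (Nat.factorial m : ℝ) * 1 := by ring
      _ ≤ (Nat.factorial m : ℝ) * (Nat.factorial (m + n) : ℝ) :=
        mul_le_mul_of_nonneg_left (hfac _) (by positivity)

def pairEquiv : ℤ × ℕ ≃ ℕ × ℕ where
  toFun x := if 0 ≤ x.1 then (x.2 + x.1.toNat, x.2) else (x.2, x.2 + (-x.1).toNat)
  invFun y := ((y.1 : ℤ) - (y.2 : ℤ), min y.1 y.2)
  left_inv := by
    rintro ⟨n, m⟩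
    rcases le_or_gt 0 n with h | h
    · simp only [if_pos h, Prod.mk.injEq]
      exact ⟨by push_cast; omega, by omega⟩
    · simp only [if_neg (not_le.2 h), Prod.mk.injEq]
      exact ⟨by push_cast; omega, by omega⟩
  right_inv := by
    rintro ⟨p, q⟩
    rcases le_or_gt q p with h | h
    · have h0 : (0 : ℤ) ≤ (p : ℤ) - (q : ℤ) := by omega
      simp only [if_pos h0, Prod.mk.injEq]
      constructor <;> omega
    · have h0 : ¬ (0 : ℤ) ≤ (p : ℤ) - (q : ℤ) := by omega
      simp only [if_neg h0, Prod.mk.injEq]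
      constructor <;> omega

set_option maxHeartbeats 1000000 in
lemma jacobi_anger_gen (z t : ℂ) (ht : t ≠ 0) :
    HasSum (fun n : ℤ => besselJ n z * t ^ n)
      (Complex.exp (z / 2 * t) * Complex.exp (-(z / 2) * t⁻¹)) := by
  have h1 := exp_hasSum (z / 2 * t)
  have h2 := exp_hasSum (-(z / 2) * t⁻¹)
  have hs : Summable (fun x : ℕ × ℕ =>
      ((z / 2 * t) ^ x.1 / (x.1.factorial : ℂ)) * ((-(z / 2) * t⁻¹) ^ x.2 / (x.2.factorial : ℂ))) :=
    Summable.of_norm (Summable.mul_norm (f := fun p : ℕ => (z / 2 * t) ^ p / (p.factorial : ℂ))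
      (g := fun q : ℕ => (-(z / 2) * t⁻¹) ^ q / (q.factorial : ℂ))
      (exp_norm_summable _) (exp_norm_summable _))
  have hprod := h1.mul h2 hs
  set F : ℕ × ℕ → ℂ := fun x =>
    ((z / 2 * t) ^ x.1 / (x.1.factorial : ℂ)) * ((-(z / 2) * t⁻¹) ^ x.2 / (x.2.factorial : ℂ))
    with hFdef
  have hZ : HasSum (F ∘ pairEquiv) (Complex.exp (z / 2 * t) * Complex.exp (-(z / 2) * t⁻¹)) :=
    (pairEquiv.hasSum_iff).2 hprod
  refine hZ.prod_fiberwise fun n => ?_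
  rcases le_or_gt 0 n with h | h
  · set n' : ℕ := n.toNat with hn'
    have hnn : (n' : ℤ) = n := Int.toNat_of_nonneg h
    have hb : HasSum (fun m : ℕ =>
        ((-1 : ℂ) ^ m / ((Nat.factorial m : ℂ) * (Nat.factorial (m + n') : ℂ)))
          * (z / 2) ^ (2 * m + n') * t ^ n')
        (besselJnat n' z * t ^ n') := ((besselTerm_summable n' z).hasSum).mul_right (t ^ n')
    have hJ : besselJ n z = besselJnat n' z := by rw [besselJ, if_pos h]
    have htn : t ^ n = t ^ n' := by rw [← hnn, zpow_natCast]
    rw [hJ, htn]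
    refine HasSum.congr_fun hb fun m => ?_
    symm
    show ((-1 : ℂ) ^ m / ((Nat.factorial m : ℂ) * (Nat.factorial (m + n') : ℂ)))
        * (z / 2) ^ (2 * m + n') * t ^ n'
      = F (pairEquiv (n, m))
    have hpe : pairEquiv (n, m) = (m + n', m) := by
      show (if 0 ≤ n then (m + n.toNat, m) else (m, m + (-n).toNat)) = (m + n', m)
      rw [if_pos h]
    rw [hpe]
    show _ = ((z / 2 * t) ^ (m + n') / ((m + n').factorial : ℂ))
      * ((-(z / 2) * t⁻¹) ^ m / (m.factorial : ℂ))
    have htm : t ^ m ≠ 0 := pow_ne_zero _ ht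
    have e1 : (z / 2 * t) ^ (m + n') = (z / 2) ^ (m + n') * (t ^ m * t ^ n') := by
      rw [mul_pow, pow_add t]
    have e2 : (-(z / 2) * t⁻¹) ^ m = (-1 : ℂ) ^ m * (z / 2) ^ m * (t ^ m)⁻¹ := by
      rw [mul_pow, inv_pow, neg_pow]
    rw [e1, e2, show (z / 2) ^ (m + n') * (t ^ m * t ^ n') / ((m + n').factorial : ℂ)
        * ((-1 : ℂ) ^ m * (z / 2) ^ m * (t ^ m)⁻¹ / (m.factorial : ℂ))
      = t ^ m * (t ^ m)⁻¹ * ((-1 : ℂ) ^ m * ((z / 2) ^ (m + n') * (z / 2) ^ m) * t ^ n'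
          / ((m.factorial : ℂ) * ((m + n').factorial : ℂ))) from by ring,
      mul_inv_cancel₀ htm, one_mul, ← pow_add,
      show m + n' + m = 2 * m + n' from by omega]
    ring
  · set n' : ℕ := (-n).toNat with hn'
    have hnn : (n' : ℤ) = -n := Int.toNat_of_nonneg (by omega)
    have hb : HasSum (fun m : ℕ =>
        ((-1 : ℂ) ^ m / ((Nat.factorial m : ℂ) * (Nat.factorial (m + n') : ℂ)))
          * (z / 2) ^ (2 * m + n') * ((-1 : ℂ) ^ n' * (t ^ n')⁻¹))
        (besselJnat n' z * ((-1 : ℂ) ^ n' * (t ^ n')⁻¹)) :=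
      ((besselTerm_summable n' z).hasSum).mul_right _
    have hJ : besselJ n z = (-1 : ℂ) ^ n' * besselJnat n' z := by
      rw [besselJ, if_neg (not_le.2 h)]
    have htn : t ^ n = (t ^ n')⁻¹ := by
      rw [← zpow_natCast t n', hnn, zpow_neg, inv_inv]
    rw [hJ, htn]
    rw [show besselJnat n' z * ((-1 : ℂ) ^ n' * (t ^ n')⁻¹)
        = (-1 : ℂ) ^ n' * besselJnat n' z * (t ^ n')⁻¹ from by ring] at hb
    refine HasSum.congr_fun hb fun m => ?_
    symm
    show ((-1 : ℂ) ^ m / ((Nat.factorial m : ℂ) * (Nat.factorial (m + n') : ℂ)))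
        * (z / 2) ^ (2 * m + n') * ((-1 : ℂ) ^ n' * (t ^ n')⁻¹)
      = F (pairEquiv (n, m))
    have hpe : pairEquiv (n, m) = (m, m + n') := by
      show (if 0 ≤ n then (m + n.toNat, m) else (m, m + (-n).toNat)) = (m, m + n')
      rw [if_neg (not_le.2 h)]
    rw [hpe]
    show _ = ((z / 2 * t) ^ m / (m.factorial : ℂ))
      * ((-(z / 2) * t⁻¹) ^ (m + n') / ((m + n').factorial : ℂ))
    have htm : t ^ m ≠ 0 := pow_ne_zero _ ht
    have e1 : (z / 2 * t) ^ m = (z / 2) ^ m * t ^ m := mul_pow _ _ _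
    have e2 : (-(z / 2) * t⁻¹) ^ (m + n')
        = (-1 : ℂ) ^ (m + n') * (z / 2) ^ (m + n') * ((t ^ m)⁻¹ * (t ^ n')⁻¹) := by
      rw [mul_pow, inv_pow, neg_pow, pow_add t, mul_inv]
    rw [e1, e2, show (z / 2) ^ m * t ^ m / (m.factorial : ℂ)
        * ((-1 : ℂ) ^ (m + n') * (z / 2) ^ (m + n') * ((t ^ m)⁻¹ * (t ^ n')⁻¹)
          / ((m + n').factorial : ℂ))
      = t ^ m * (t ^ m)⁻¹ * ((-1 : ℂ) ^ (m + n') * ((z / 2) ^ m * (z / 2) ^ (m + n'))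
          * (t ^ n')⁻¹ / ((m.factorial : ℂ) * ((m + n').factorial : ℂ))) from by ring,
      mul_inv_cancel₀ htm, one_mul, ← pow_add,
      show m + (m + n') = 2 * m + n' from by omega, pow_add (-1 : ℂ) m n']
    ring


/-- Jacobi–Anger expansion: `e^{i k r cos θ} = Σ_{n∈ℤ} iⁿ Jₙ(k r) e^{i n θ}`. -/
theorem jacobi_anger (r : ℝ) (k : ℂ) (θ : ℝ) :
    HasSum (fun n : ℤ => Complex.I ^ n * besselJ n (k * r) * Complex.exp (Complex.I * n * θ))
      (Complex.exp (Complex.I * k * r * Real.cos θ)) := by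
  have ht : (Complex.I * Complex.exp (Complex.I * θ)) ≠ 0 :=
    mul_ne_zero Complex.I_ne_zero (Complex.exp_ne_zero _)
  have hgen := jacobi_anger_gen (k * r) (Complex.I * Complex.exp (Complex.I * θ)) ht
  have hsum : Complex.exp (k * r / 2 * (Complex.I * Complex.exp (Complex.I * θ)))
      * Complex.exp (-(k * r / 2) * (Complex.I * Complex.exp (Complex.I * θ))⁻¹)
      = Complex.exp (Complex.I * k * r * Real.cos θ) := by
    rw [← Complex.exp_add]
    congr 1
    have hti : (Complex.I * Complex.exp (Complex.I * θ))⁻¹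
        = -Complex.I * Complex.exp (-(Complex.I * θ)) := by
      rw [mul_inv, Complex.inv_I, ← Complex.exp_neg]
    rw [hti]
    have he1 : Complex.exp (Complex.I * θ) = Complex.cos θ + Complex.sin θ * Complex.I := by
      rw [mul_comm, Complex.exp_mul_I]
    have he2 : Complex.exp (-(Complex.I * θ)) = Complex.cos θ - Complex.sin θ * Complex.I := by
      rw [show -(Complex.I * (θ : ℂ)) = (-θ : ℂ) * Complex.I by ring, Complex.exp_mul_I,
        Complex.cos_neg, Complex.sin_neg]
      ring
    rw [he1, he2, Complex.ofReal_cos]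
    ring
  rw [hsum] at hgen
  refine HasSum.congr_fun hgen fun n => ?_
  have htn : (Complex.I * Complex.exp (Complex.I * θ)) ^ n
      = Complex.I ^ n * Complex.exp (Complex.I * n * θ) := by
    rw [mul_zpow, ← Complex.exp_int_mul]
    congr 2
    ring
  rw [htn]
  ring
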